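/- For every multigraph G and all real numbers x, y: f(G; (x−1)(y−1), y−1, 1) = (y−1)^{|V(G)|} · (x−1)^{ω(G)} · T(G;x,y). -/

import Mathlib

attribute [local instance] Classical.propDecidable

/-- A multigraph: a finite vertex type, a finite edge index type, and an endpoint
map sending each edge to an unordered pair of vertices. -/
structure Multigraph where
  V : Type
  E : Type
  [finV : Fintype V]
  [finE : Fintype E]
  ends : E → Sym2 V

attribute [instance] Multigraph.finV Multigraph.finE

namespace Multigraph

/-- Two vertices are related if some edge of `S` has them as its endpoints. -/
def rel (G : Multigraph) (S : Finset G.E) (v w : G.V) : Prop :=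
  ∃ e ∈ S, G.ends e = s(v, w)

/-- `ω(S)`: the number of connected components of the spanning subgraph `(V(G), S)`. -/
noncomputable def omega (G : Multigraph) (S : Finset G.E) : ℕ :=
  Nat.card (Quotient (Relation.EqvGen.setoid (G.rel S)))

/-- `ω(G)`: the number of connected components of `G`. -/
noncomputable def omegaG (G : Multigraph) : ℕ :=
  G.omega Finset.univ

/-- The Negami polynomial `f(G;t,x,y)`. -/
noncomputable def negami (G : Multigraph) (t x y : ℝ) : ℝ :=
  ∑ S : Finset G.E, t ^ G.omega S * x ^ S.card * y ^ (Fintype.card G.E - S.card)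

/-- The Tutte polynomial `T(G;x,y)`. -/
noncomputable def tutte (G : Multigraph) (x y : ℝ) : ℝ :=
  ∑ S : Finset G.E,
    (x - 1) ^ (G.omega S - G.omegaG) *
      (y - 1) ^ (G.omega S + S.card - Fintype.card G.V)

end Multigraph

/-- The setoid on `V` extending a setoid `A` on the subset `U`: its nontrivial
classes are exactly the blocks of `A`. -/
def extendSetoid {V : Type} (U : Set V) (A : Setoid U) : Setoid V where
  r v w := v = w ∨ ∃ (hv : v ∈ U) (hw : w ∈ U), A.r ⟨v, hv⟩ ⟨w, hw⟩
  iseqv := by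
    constructor
    · exact fun v => Or.inl rfl
    · rintro v w (rfl | ⟨hv, hw, h⟩)
      · exact Or.inl rfl
      · exact Or.inr ⟨hw, hv, A.symm h⟩
    · rintro v w z (rfl | ⟨hv, hw, h⟩) (rfl | ⟨hw', hz, h'⟩)
      · exact Or.inl rfl
      · exact Or.inr ⟨hw', hz, h'⟩
      · exact Or.inr ⟨hv, hw, h⟩
      · exact Or.inr ⟨hv, hz, A.trans h h'⟩

namespace Multigraph

/-- The contraction `K/A` of a multigraph `K` by a partition `A` of a subset `U` of
its vertices: all vertices in a common block of `A` are identified. -/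
noncomputable def contract (K : Multigraph) {U : Set K.V} (A : Setoid U) : Multigraph where
  V := Quotient (extendSetoid U A)
  E := K.E
  finV := Fintype.ofFinite _
  finE := K.finE
  ends e := (K.ends e).map (Quotient.mk (extendSetoid U A))

/-- `P(S)`: the partition of `U` in which two vertices lie in the same block iff they
lie in the same connected component of the spanning subgraph `(V(K), S)`. -/
def part (K : Multigraph) (U : Set K.V) (S : Finset K.E) : Setoid U :=
  Setoid.comap Subtype.val (Relation.EqvGen.setoid (K.rel S))

/-- The auxiliary Negami polynomial `f_A(K;t,x,y)`. -/
noncomputable def negamiAux (K : Multigraph) (U : Set K.V) (A : Setoid U) (t x y : ℝ) : ℝ :=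
  ∑ S : Finset K.E,
    if K.part U S = A then
      t ^ (K.omega S - Nat.card (Quotient A)) * x ^ S.card *
        y ^ (Fintype.card K.E - S.card)
    else 0

/-- The auxiliary Tutte polynomial `T_A(K;x,y)`. -/
noncomputable def tutteAux (K : Multigraph) (U : Set K.V) (A : Setoid U) (x y : ℝ) : ℝ :=
  ∑ S : Finset K.E,
    if K.part U S = A then
      (x - 1) ^ (K.omega S - Nat.card (Quotient A)) *
        (y - 1) ^ (K.omega S + S.card - Fintype.card K.V)
    else 0

end Multigraph

/-- The set of partitions of a finite type is finite. -/
instance setoidFinite {α : Type} [Finite α] : Finite (Setoid α) :=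
  Finite.of_injective (fun s : Setoid α => s.r) fun a b h => by
    cases a; cases b; simp only at h; subst h; rfl

noncomputable instance setoidFintype {α : Type} [Finite α] : Fintype (Setoid α) :=
  Fintype.ofFinite _

/-- The number of blocks `|A|` of a partition (setoid) `A`. -/
noncomputable def nblocks {α : Type} (A : Setoid α) : ℕ :=
  Nat.card (Quotient A)

/-- The matrix `T_n(t)` indexed by partitions of `α`, with `(A,B)`-entry
`t^{|A∧B|}` where `A∧B` is the finest common coarsening (the join `A ⊔ B`). -/
noncomputable def Tmat (α : Type) [Finite α] (t : ℝ) :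
    Matrix (Setoid α) (Setoid α) ℝ :=
  Matrix.of fun A B => t ^ nblocks (A ⊔ B)

/-- The matrix `L_n(x)` indexed by partitions of `α`, with `(A,B)`-entry
`(x-1)^{|A∧B|-1}` if `|A∧B| + n = |A| + |B|` and `0` otherwise. -/
noncomputable def Lmat (α : Type) [Finite α] (n : ℕ) (x : ℝ) :
    Matrix (Setoid α) (Setoid α) ℝ :=
  Matrix.of fun A B =>
    if nblocks (A ⊔ B) + n = nblocks A + nblocks B then
      (x - 1) ^ (nblocks (A ⊔ B) - 1)
    else 0

/-- The connectivity matrix `A_n` indexed by partitions of `α`, with `(A,B)`-entry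
`1` if `|A∧B| = 1` and `0` otherwise. -/
noncomputable def Amat (α : Type) [Finite α] :
    Matrix (Setoid α) (Setoid α) ℝ :=
  Matrix.of fun A B => if nblocks (A ⊔ B) = 1 then (1 : ℝ) else 0

/-- `G` is an `n`-sum of `K` and `H` along `U`: `V(G) = V(K) ∪ V(H)`,
`V(K) ∩ V(H) = U`, and `E(G)` is the disjoint union of `E(K)` and `E(H)` with the
inherited endpoint maps. -/
structure NSum (G K H : Multigraph) (U : Set G.V) where
  ιK : K.V → G.V
  ιH : H.V → G.V
  injK : Function.Injective ιK
  injH : Function.Injective ιH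
  cover : Set.range ιK ∪ Set.range ιH = Set.univ
  inter : Set.range ιK ∩ Set.range ιH = U
  edgeEquiv : G.E ≃ K.E ⊕ H.E
  endsK : ∀ a, G.ends (edgeEquiv.symm (Sum.inl a)) = (K.ends a).map ιK
  endsH : ∀ a, G.ends (edgeEquiv.symm (Sum.inr a)) = (H.ends a).map ιH

namespace NSum

variable {G K H : Multigraph} {U : Set G.V}

/-- The copy of a partition `A` of `U` on the corresponding subset of `V(K)`. -/
def pullK (σ : NSum G K H U) (A : Setoid U) : Setoid (σ.ιK ⁻¹' U : Set K.V) :=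
  Setoid.comap (fun v => ⟨σ.ιK v.1, v.2⟩) A

/-- The copy of a partition `A` of `U` on the corresponding subset of `V(H)`. -/
def pullH (σ : NSum G K H U) (A : Setoid U) : Setoid (σ.ιH ⁻¹' U : Set H.V) :=
  Setoid.comap (fun v => ⟨σ.ιH v.1, v.2⟩) A

/-- The contraction `K/A` for a partition `A` of the common vertex set `U`. -/
noncomputable def contractK (σ : NSum G K H U) (A : Setoid U) : Multigraph :=
  K.contract (σ.pullK A)

/-- The contraction `H/B` for a partition `B` of the common vertex set `U`. -/
noncomputable def contractH (σ : NSum G K H U) (B : Setoid U) : Multigraph :=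
  H.contract (σ.pullH B)

end NSum


namespace Multigraph

lemma omega_le {G : Multigraph} {S T : Finset G.E} (h : S ⊆ T) : G.omega T ≤ G.omega S := by
  have mono : ∀ a b : G.V, Relation.EqvGen (G.rel S) a b → Relation.EqvGen (G.rel T) a b := by
    intro a b hab
    exact Relation.EqvGen.mono (show ∀ v w, G.rel S v w → G.rel T v w from fun v w ⟨e, he, hew⟩ => ⟨e, h he, hew⟩) a b hab
  apply Nat.card_le_card_of_surjective
    (Quotient.map' (id : G.V → G.V) (fun a b h => mono a b h))
  intro q
  obtain ⟨a, rfl⟩ := Quotient.exists_rep q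
  exact ⟨Quotient.mk'' a, rfl⟩

lemma omega_empty (G : Multigraph) : G.omega ∅ = Fintype.card G.V := by
  have key : ∀ a b : G.V, Relation.EqvGen (G.rel (∅ : Finset G.E)) a b → a = b := by
    intro a b h
    induction h with
    | rel _ _ h => obtain ⟨e, he, _⟩ := h; simp at he
    | refl => rfl
    | symm _ _ _ ih => exact ih.symm
    | trans _ _ _ _ _ ih1 ih2 => exact ih1.trans ih2
  rw [omega, ← Nat.card_eq_fintype_card]
  refine Nat.card_congr (Equiv.ofBijective (Quotient.mk'' : G.V → _) ⟨?_, ?_⟩).symm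
  · intro a b h
    exact key a b (Quotient.exact' h)
  · intro q; obtain ⟨a, rfl⟩ := Quotient.exists_rep q; exact ⟨a, rfl⟩

lemma omega_insert {G : Multigraph} (S : Finset G.E) (e : G.E) :
    G.omega S ≤ G.omega (insert e S) + 1 := by
  obtain ⟨u, v, huv⟩ : ∃ u v, G.ends e = s(u, v) := by
    induction G.ends e using Sym2.ind with
    | _ a b => exact ⟨a, b, rfl⟩
  set E' := Relation.EqvGen (G.rel S) with hE'
  have Eequiv : Equivalence E' := Relation.EqvGen.is_equivalence _
  have claim : ∀ a b : G.V, Relation.EqvGen (G.rel (insert e S)) a b →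
      E' a b ∨ (E' a u ∧ E' v b) ∨ (E' a v ∧ E' u b) := by
    intro a b h
    induction h with
    | rel a b hab =>
      obtain ⟨e', he', hew⟩ := hab
      rcases Finset.mem_insert.mp he' with rfl | he'S
      · rw [huv] at hew
        rcases Sym2.eq_iff.mp hew with ⟨rfl, rfl⟩ | ⟨rfl, rfl⟩
        · exact Or.inr (Or.inl ⟨Eequiv.refl _, Eequiv.refl _⟩)
        · exact Or.inr (Or.inr ⟨Eequiv.refl _, Eequiv.refl _⟩)
      · exact Or.inl (Relation.EqvGen.rel _ _ ⟨e', he'S, hew⟩)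
    | refl a => exact Or.inl (Eequiv.refl a)
    | symm a b _ ih =>
      rcases ih with h | ⟨h1, h2⟩ | ⟨h1, h2⟩
      · exact Or.inl (Eequiv.symm h)
      · exact Or.inr (Or.inr ⟨Eequiv.symm h2, Eequiv.symm h1⟩)
      · exact Or.inr (Or.inl ⟨Eequiv.symm h2, Eequiv.symm h1⟩)
    | trans a b c _ _ ih1 ih2 =>
      rcases ih1 with h | ⟨h1, h2⟩ | ⟨h1, h2⟩ <;>
        rcases ih2 with h' | ⟨h1', h2'⟩ | ⟨h1', h2'⟩
      · exact Or.inl (Eequiv.trans h h')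
      · exact Or.inr (Or.inl ⟨Eequiv.trans h h1', h2'⟩)
      · exact Or.inr (Or.inr ⟨Eequiv.trans h h1', h2'⟩)
      · exact Or.inr (Or.inl ⟨h1, Eequiv.trans h2 h'⟩)
      · exact Or.inr (Or.inl ⟨h1, h2'⟩)
      · exact Or.inl (Eequiv.trans h1 h2')
      · exact Or.inr (Or.inr ⟨h1, Eequiv.trans h2 h'⟩)
      · exact Or.inl (Eequiv.trans h1 h2')
      · exact Or.inr (Or.inr ⟨h1, h2'⟩)
  set s := Relation.EqvGen.setoid (G.rel S) with hs
  set t := Relation.EqvGen.setoid (G.rel (insert e S)) with ht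
  have mono : ∀ a b : G.V, E' a b → Relation.EqvGen (G.rel (insert e S)) a b :=
    fun a b h =>
      Relation.EqvGen.mono
        (show ∀ v w, G.rel S v w → G.rel (insert e S) v w from fun v w ⟨e', he, hew⟩ => ⟨e', Finset.mem_insert_of_mem he, hew⟩) a b h
  let g : Quotient s → Quotient t := Quotient.map' id (fun a b h => mono a b h)
  let F : Quotient s → Quotient t ⊕ Unit := fun q =>
    if q = (Quotient.mk'' v : Quotient s) ∧ ¬ E' u v then Sum.inr () else Sum.inl (g q)
  have hF : Function.Injective F := by
    intro q1 q2 h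
    refine Quotient.inductionOn₂' q1 q2 (fun a b h => ?_) h
    simp only [F] at h
    split_ifs at h with h1 h2 h2
    · exact h1.1.trans h2.1.symm
    · have hab : Relation.EqvGen (G.rel (insert e S)) a b := Quotient.exact' (show (Quotient.mk'' a : Quotient t) = Quotient.mk'' b by simpa [g, Quotient.map'_mk''] using h)
      rcases claim a b hab with hE | ⟨hau, hvb⟩ | ⟨hav, hub⟩
      · exact Quotient.sound' hE
      · by_cases huv : E' u v
        · exact Quotient.sound' (Eequiv.trans hau (Eequiv.trans huv hvb))
        · exact absurd ⟨Quotient.sound' (Eequiv.symm hvb), huv⟩ h2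
      · by_cases huv : E' u v
        · exact Quotient.sound' (Eequiv.trans hav (Eequiv.trans (Eequiv.symm huv) hub))
        · exact absurd ⟨Quotient.sound' hav, huv⟩ h1
  calc G.omega S = Nat.card (Quotient s) := rfl
    _ ≤ Nat.card (Quotient t ⊕ Unit) := Nat.card_le_card_of_injective F hF
    _ = G.omega (insert e S) + 1 := by
        rw [Nat.card_sum]; simp [omega, ht]

lemma card_V_le (G : Multigraph) (S : Finset G.E) :
    Fintype.card G.V ≤ G.omega S + S.card := by
  classical
  induction S using Finset.induction_on with
  | empty => simp [G.omega_empty]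
  | insert e S hnm ih =>
    calc Fintype.card G.V ≤ G.omega S + S.card := ih
      _ ≤ (G.omega (insert e S) + 1) + S.card := by
          exact Nat.add_le_add_right (omega_insert S e) _
      _ = G.omega (insert e S) + (insert e S).card := by
          rw [Finset.card_insert_of_notMem hnm]; ring

lemma omegaG_le (G : Multigraph) (S : Finset G.E) : G.omegaG ≤ G.omega S :=
  omega_le (Finset.subset_univ S)

end Multigraph

/-- the relation between the Negami and the Tutte polynomials:
`f(G;(x−1)(y−1), y−1, 1) = (y−1)^{|V(G)|}·(x−1)^{ω(G)}·T(G;x,y)`. -/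
theorem negami_tutte_relation (G : Multigraph) (x y : ℝ) :
    G.negami ((x - 1) * (y - 1)) (y - 1) 1 =
      (y - 1) ^ Fintype.card G.V * (x - 1) ^ G.omegaG * G.tutte x y := by
  rw [Multigraph.negami, Multigraph.tutte, Finset.mul_sum]
  refine Finset.sum_congr rfl fun S _ => ?_
  have h1 : G.omegaG ≤ G.omega S := G.omegaG_le S
  have h2 : Fintype.card G.V ≤ G.omega S + S.card := G.card_V_le S
  have e1 : (x - 1) ^ G.omega S = (x - 1) ^ G.omegaG * (x - 1) ^ (G.omega S - G.omegaG) := by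
    rw [← pow_add, Nat.add_sub_cancel' h1]
  have e2 : (y - 1) ^ (G.omega S + S.card) =
      (y - 1) ^ Fintype.card G.V * (y - 1) ^ (G.omega S + S.card - Fintype.card G.V) := by
    rw [← pow_add, Nat.add_sub_cancel' h2]
  rw [mul_pow, one_pow, pow_add] at *
  linear_combination ((y - 1) ^ G.omega S * (y - 1) ^ S.card) * e1 +
    ((x - 1) ^ G.omegaG * (x - 1) ^ (G.omega S - G.omegaG)) * e2
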